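/- In the ring R = ℝ[t, t⁻¹] of real Laurent polynomials, the quadratic polynomial X² − (t + 4 + t⁻¹)X + 1 ∈ R[X] has no root in R. In particular, it does not split into linear factors over R. -/

import Mathlib

open Polynomial LaurentPolynomial

/-- In `R = ℝ[t, t⁻¹]`, the polynomial `X² − (t + 4 + t⁻¹)·X + 1 ∈ R[X]`
has no root in `R`. -/
theorem laurent_quadratic_no_root :
    ∀ r : LaurentPolynomial ℝ,
      ¬ (Polynomial.X ^ 2
          - Polynomial.C (LaurentPolynomial.T 1 + 4 + LaurentPolynomial.T (-1)) * Polynomial.X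
          + 1 : Polynomial (LaurentPolynomial ℝ)).IsRoot r := by
  intro r hr
  set a : LaurentPolynomial ℝ := T 1 + 4 + T (-1) with ha
  have heq : r ^ 2 - a * r + 1 = 0 := by
    simpa [Polynomial.IsRoot] using hr
  set s : LaurentPolynomial ℝ := a - r with hs
  have hrs : r * s = 1 := by rw [hs]; linear_combination -heq
  obtain ⟨n, p, hp⟩ := LaurentPolynomial.exists_T_pow r
  obtain ⟨m, q, hq⟩ := LaurentPolynomial.exists_T_pow s
  have hpq : p * q = X ^ (n + m) := by
    apply Polynomial.toLaurent_injective
    rw [map_mul, hp, hq, map_pow, Polynomial.toLaurent_X]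
    calc r * T ↑n * (s * T ↑m) = (r * s) * (T ↑n * T ↑m) := by ring
    _ = T (↑n + ↑m) := by rw [hrs, one_mul, ← T_add]
    _ = T 1 ^ (n + m) := by rw [T_pow]; norm_num
  obtain ⟨i, hi, u, hu⟩ := (dvd_prime_pow Polynomial.prime_X (n + m)).mp ⟨q, hpq.symm⟩
  obtain ⟨j, hj, v, hv⟩ := (dvd_prime_pow Polynomial.prime_X (n + m)).mp
    ⟨p, by rw [mul_comm]; exact hpq.symm⟩
  obtain ⟨c, hcu, hc⟩ := Polynomial.isUnit_iff.mp u⁻¹.isUnit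
  obtain ⟨d, hdu, hd⟩ := Polynomial.isUnit_iff.mp v⁻¹.isUnit
  have hpc : p = Polynomial.C c * X ^ i := by
    rw [hc]
    rw [← hu, mul_left_comm, Units.inv_mul, mul_one]
  have hqd : q = Polynomial.C d * X ^ j := by
    rw [hd]
    rw [← hv, mul_left_comm, Units.inv_mul, mul_one]
  have hr_eq : r = LaurentPolynomial.C c * T ((i : ℤ) - n) := by
    have h1 : r * T ↑n * T (-↑n) = r := by simp
    rw [← h1, ← hp, hpc, map_mul, map_pow, Polynomial.toLaurent_C, Polynomial.toLaurent_X]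
    rw [T_pow, mul_one, mul_T_assoc, T_sub, ← T_add]
  have hs_eq : s = LaurentPolynomial.C d * T ((j : ℤ) - m) := by
    have h1 : s * T ↑m * T (-↑m) = s := by simp
    rw [← h1, ← hq, hqd, map_mul, map_pow, Polynomial.toLaurent_C, Polynomial.toLaurent_X]
    rw [T_pow, mul_one, mul_T_assoc, T_sub, ← T_add]
  have hA : a = LaurentPolynomial.C c * T ((i : ℤ) - n) + LaurentPolynomial.C d * T ((j : ℤ) - m) := by
    rw [← hr_eq, ← hs_eq, hs]; ring
  obtain ⟨k, hk1, hku, hkv⟩ : ∃ k : ℤ, (k = -1 ∨ k = 0 ∨ k = 1) ∧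
      k ≠ (i : ℤ) - n ∧ k ≠ (j : ℤ) - m := by
    by_cases h0 : (i : ℤ) - n = 0 ∨ (j : ℤ) - m = 0
    · by_cases h1 : (i : ℤ) - n = 1 ∨ (j : ℤ) - m = 1
      · exact ⟨-1, by omega, by omega, by omega⟩
      · exact ⟨1, by omega, by omega, by omega⟩
    · exact ⟨0, by omega, by omega, by omega⟩
  have hcoeff : (a : LaurentPolynomial ℝ).coeff k =
      (LaurentPolynomial.C c * T ((i : ℤ) - n) + LaurentPolynomial.C d * T ((j : ℤ) - m) :
        LaurentPolynomial ℝ).coeff k := by rw [hA]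
  have h4 : (4 : LaurentPolynomial ℝ) = LaurentPolynomial.C (4 : ℝ) := by
    rw [map_ofNat]
  rw [ha, h4] at hcoeff
  simp only [← single_eq_C_mul_T] at hcoeff
  rw [show (LaurentPolynomial.C (4 : ℝ)) = AddMonoidAlgebra.single (0 : ℤ) (4 : ℝ) from rfl,
    show (T 1 : LaurentPolynomial ℝ) = AddMonoidAlgebra.single (1 : ℤ) (1 : ℝ) from rfl,
    show (T (-1) : LaurentPolynomial ℝ) = AddMonoidAlgebra.single (-1 : ℤ) (1 : ℝ) from rfl] at hcoeff
  have hval : ∀ (f g : LaurentPolynomial ℝ) (x : ℤ), (f + g).coeff x = f.coeff x + g.coeff x := fun _ _ _ => rfl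
  simp only [hval, AddMonoidAlgebra.coeff_single, Finsupp.single_apply] at hcoeff
  rcases hk1 with rfl | rfl | rfl <;>
    norm_num [Ne.symm hku, Ne.symm hkv] at hcoeff
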